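/- Assume additionally that t ≠ 0. Then in the formal power series ring F[[z]] the following partial fraction decomposition holds: F(z) = t^{−N} + (t − 1)·t^{−N} · ∑_{i=1}^N A_i · (1 − t·z·x_i)^{−1}, where (1 − t·z·x_i)^{−1} denotes the inverse of the power series 1 − t·z·x_i (which is invertible since its constant term is 1). -/

import Mathlib

section Aux

open Polynomial Finset


variable {F : Type*} [Field F] {ι : Type*} [DecidableEq ι]

lemma factor_eq (a : F) (ha : a ≠ 0) :
    (1 - C a * X : F[X]) = C (-a) * (X - C a⁻¹) := by
  rw [mul_sub, ← C_mul, map_neg]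
  field_simp
  rw [map_neg, map_one]
  ring

lemma lemA (s : Finset ι) (t : F) (ht : t ≠ 0) (x : ι → F)
    (hinj : Set.InjOn x s) (hx0 : ∀ i ∈ s, x i ≠ 0) :
    (∏ i ∈ s, (1 - C (x i) * X : F[X])) =
      C ((t ^ s.card)⁻¹) * ∏ i ∈ s, (1 - C (t * x i) * X)
      + C ((t - 1) * (t ^ s.card)⁻¹) *
          ∑ i ∈ s, C (∏ j ∈ s.erase i, (t * x i - x j) / (x i - x j)) *
            ∏ j ∈ s.erase i, (1 - C (t * x j) * X) := by
  classical
  rcases s.eq_empty_or_nonempty with rfl | hne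
  · simp
  have hn1 : 1 ≤ s.card := hne.card_pos
  set n := s.card with hn
  set D : F[X] :=
    (∏ i ∈ s, (1 - C (x i) * X : F[X]))
      - (C ((t ^ n)⁻¹) * ∏ i ∈ s, (1 - C (t * x i) * X)
      + C ((t - 1) * (t ^ n)⁻¹) *
          ∑ i ∈ s, C (∏ j ∈ s.erase i, (t * x i - x j) / (x i - x j)) *
            ∏ j ∈ s.erase i, (1 - C (t * x j) * X)) with hD
  suffices hDz : D = 0 by
    have h2 := sub_eq_zero.mp hDz
    exact h2
  -- degree bound
  have hdegD : D.degree < (n : ℕ) := by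
    have hM1 : (∏ i ∈ s, (X - C (x i)⁻¹ : F[X])).Monic :=
      monic_prod_of_monic _ _ fun i _ => monic_X_sub_C _
    have hM2 : (∏ i ∈ s, (X - C (t * x i)⁻¹ : F[X])).Monic :=
      monic_prod_of_monic _ _ fun i _ => monic_X_sub_C _
    have hdM1 : (∏ i ∈ s, (X - C (x i)⁻¹ : F[X])).degree = (n : ℕ) := by
      rw [degree_prod, Finset.sum_congr rfl fun i (_ : i ∈ s) => degree_X_sub_C ((x i)⁻¹)]
      simp [hn]
    have hdM2 : (∏ i ∈ s, (X - C (t * x i)⁻¹ : F[X])).degree = (n : ℕ) := by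
      rw [degree_prod, Finset.sum_congr rfl fun i (_ : i ∈ s) => degree_X_sub_C ((t * x i)⁻¹)]
      simp [hn]
    have hP : (∏ i ∈ s, (1 - C (x i) * X : F[X]))
        = C (∏ i ∈ s, (-(x i))) * ∏ i ∈ s, (X - C (x i)⁻¹) := by
      rw [map_prod, ← prod_mul_distrib]
      exact prod_congr rfl fun i hi => factor_eq (x i) (hx0 i hi)
    have hQ : (∏ i ∈ s, (1 - C (t * x i) * X : F[X]))
        = C (∏ i ∈ s, (-(t * x i))) * ∏ i ∈ s, (X - C (t * x i)⁻¹) := by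
      rw [map_prod, ← prod_mul_distrib]
      exact prod_congr rfl fun i hi => factor_eq _ (mul_ne_zero ht (hx0 i hi))
    have hv : (t ^ n)⁻¹ * ∏ i ∈ s, (-(t * x i)) = ∏ i ∈ s, (-(x i)) := by
      have h3 : ∏ i ∈ s, (-(t * x i)) = t ^ n * ∏ i ∈ s, (-(x i)) := by
        rw [← prod_const, ← prod_mul_distrib]
        exact prod_congr rfl fun i _ => by ring
      rw [h3, ← mul_assoc, inv_mul_cancel₀ (pow_ne_zero _ ht), one_mul]
    have key : (∏ i ∈ s, (1 - C (x i) * X : F[X]))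
        - C ((t ^ n)⁻¹) * ∏ i ∈ s, (1 - C (t * x i) * X)
        = C (∏ i ∈ s, (-(x i))) *
            ((∏ i ∈ s, (X - C (x i)⁻¹)) - ∏ i ∈ s, (X - C (t * x i)⁻¹)) := by
      rw [hP, hQ, ← mul_assoc, ← C_mul, hv, mul_sub]
    have hsub : ((∏ i ∈ s, (X - C (x i)⁻¹ : F[X])) - ∏ i ∈ s, (X - C (t * x i)⁻¹)).degree
        < (n : ℕ) := by
      calc _ < (∏ i ∈ s, (X - C (x i)⁻¹ : F[X])).degree :=
            degree_sub_lt (hdM1.trans hdM2.symm) hM1.ne_zero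
              (by rw [hM1.leadingCoeff, hM2.leadingCoeff])
        _ = (n : ℕ) := hdM1
    have hsum : (∑ i ∈ s, C (∏ j ∈ s.erase i, (t * x i - x j) / (x i - x j)) *
          ∏ j ∈ s.erase i, (1 - C (t * x j) * X : F[X])).degree < (n : ℕ) := by
      refine lt_of_le_of_lt (degree_sum_le _ _) ?_
      rw [Finset.sup_lt_iff (by exact_mod_cast WithBot.bot_lt_coe _)]
      intro i hi
      refine lt_of_le_of_lt (degree_mul_le _ _) ?_
      have h2 : (∏ j ∈ s.erase i, (1 - C (t * x j) * X : F[X])).degree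
          ≤ ((n - 1 : ℕ) : WithBot ℕ) := by
        refine le_trans degree_le_natDegree ?_
        have h4 : (∏ j ∈ s.erase i, (1 - C (t * x j) * X : F[X])).natDegree ≤ n - 1 := by
          refine le_trans (natDegree_prod_le _ _) ?_
          calc ∑ j ∈ s.erase i, (1 - C (t * x j) * X : F[X]).natDegree
              ≤ ∑ j ∈ s.erase i, 1 := by
                refine Finset.sum_le_sum fun j _ => ?_
                refine le_trans (natDegree_sub_le _ _) (max_le (by simp) ?_)
                exact le_trans (natDegree_C_mul_le _ _) (by simp)
            _ = (s.erase i).card := by simp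
            _ = n - 1 := by rw [card_erase_of_mem hi]
        exact_mod_cast h4
      have h5 : ((n - 1 : ℕ) : WithBot ℕ) < (n : ℕ) := by
        exact_mod_cast Nat.sub_lt (lt_of_lt_of_le one_pos hn1) one_pos
      calc degree (C (∏ j ∈ s.erase i, (t * x i - x j) / (x i - x j)) : F[X])
            + (∏ j ∈ s.erase i, (1 - C (t * x j) * X : F[X])).degree
          ≤ 0 + ((n - 1 : ℕ) : WithBot ℕ) := add_le_add degree_C_le h2
        _ = ((n - 1 : ℕ) : WithBot ℕ) := by rw [zero_add]
        _ < (n : ℕ) := h5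
    have hDrw : D = ((∏ i ∈ s, (1 - C (x i) * X : F[X]))
        - C ((t ^ n)⁻¹) * ∏ i ∈ s, (1 - C (t * x i) * X))
        - C ((t - 1) * (t ^ n)⁻¹) *
          ∑ i ∈ s, C (∏ j ∈ s.erase i, (t * x i - x j) / (x i - x j)) *
            ∏ j ∈ s.erase i, (1 - C (t * x j) * X) := by rw [hD]; ring
    rw [hDrw]
    refine lt_of_le_of_lt (degree_sub_le _ _) (max_lt ?_ ?_)
    · rw [key]
      refine lt_of_le_of_lt (degree_mul_le _ _) ?_
      refine lt_of_le_of_lt (add_le_add degree_C_le le_rfl) ?_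
      rw [zero_add]; exact hsub
    · refine lt_of_le_of_lt (degree_mul_le _ _) ?_
      refine lt_of_le_of_lt (add_le_add degree_C_le le_rfl) ?_
      rw [zero_add]; exact hsum
  -- roots
  have heval : ∀ i ∈ s, D.eval ((t * x i)⁻¹) = 0 := by
    intro i hi
    have ha : x i ≠ 0 := hx0 i hi
    have hta : t * x i ≠ 0 := mul_ne_zero ht ha
    have hyi : 1 - t * x i * (t * x i)⁻¹ = 0 := by rw [mul_inv_cancel₀ hta, sub_self]
    rw [hD]
    simp only [eval_sub, eval_add, eval_mul, eval_prod, eval_finset_sum, eval_one, eval_C, eval_X]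
    have hQ0 : ∏ j ∈ s, (1 - t * x j * (t * x i)⁻¹) = 0 := Finset.prod_eq_zero hi hyi
    rw [hQ0, mul_zero, zero_add]
    rw [Finset.sum_eq_single_of_mem i hi (fun k hk hki =>
      mul_eq_zero_of_right _
        (Finset.prod_eq_zero (Finset.mem_erase.mpr ⟨Ne.symm hki, hi⟩) hyi))]
    set m := (s.erase i).card with hm
    have hnm : n = m + 1 := by rw [hm, card_erase_of_mem hi]; omega
    have hL : ∏ j ∈ s, (1 - x j * (t * x i)⁻¹)
        = (1 - t⁻¹) * ((∏ j ∈ s.erase i, (t * x i - x j)) * ((t * x i)⁻¹) ^ m) := by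
      rw [← Finset.mul_prod_erase s _ hi]
      have hpt : ∏ j ∈ s.erase i, (1 - x j * (t * x i)⁻¹)
          = ∏ j ∈ s.erase i, ((t * x i - x j) * (t * x i)⁻¹) := by
        refine prod_congr rfl fun j hj => ?_
        field_simp
      rw [hpt, prod_mul_distrib, prod_const]
      congr 1
      field_simp
    have hR : (∏ j ∈ s.erase i, (t * x i - x j) / (x i - x j)) *
          ∏ j ∈ s.erase i, (1 - t * x j * (t * x i)⁻¹)
        = (∏ j ∈ s.erase i, (t * x i - x j)) * ((x i)⁻¹) ^ m := by
      rw [← prod_mul_distrib]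
      have hpt : ∀ j ∈ s.erase i, (t * x i - x j) / (x i - x j) * (1 - t * x j * (t * x i)⁻¹)
          = (t * x i - x j) * (x i)⁻¹ := by
        intro j hj
        obtain ⟨hji, hjs⟩ := Finset.mem_erase.mp hj
        have hd : x i - x j ≠ 0 := sub_ne_zero.mpr fun h => hji (hinj hjs hi h.symm)
        field_simp
      rw [prod_congr rfl hpt, prod_mul_distrib, prod_const]
    rw [hL, hR, hnm]
    have hsc : (1 - t⁻¹) * ((t * x i)⁻¹) ^ m = (t - 1) * (t ^ (m + 1))⁻¹ * ((x i)⁻¹) ^ m := by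
      rw [mul_inv, mul_pow]
      field_simp
      rw [one_div, inv_pow, pow_succ]
      field_simp
    linear_combination (∏ j ∈ s.erase i, (t * x i - x j)) * hsc
  -- conclude
  by_cases hD0 : D = 0
  · exact hD0
  · refine eq_zero_of_natDegree_lt_card_of_eval_eq_zero' D (s.image fun i => (t * x i)⁻¹) ?_ ?_
    · intro r hr
      obtain ⟨i, hi, rfl⟩ := Finset.mem_image.mp hr
      exact heval i hi
    · have hcard : (s.image fun i => (t * x i)⁻¹).card = n := by
        rw [Finset.card_image_of_injOn, hn]
        intro a ha b hb hab
        have : t * x a = t * x b := inv_injective hab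
        exact hinj ha hb (mul_left_cancel₀ ht this)
      rw [hcard]
      exact (natDegree_lt_iff_degree_lt hD0).mpr hdegD

lemma lemG (s : Finset ι) (t : F) (ht : t ≠ 0) (x : ι → F)
    (hinj : Set.InjOn x s) :
    (∏ i ∈ s, (1 - C (x i) * X : F[X])) =
      C ((t ^ s.card)⁻¹) * ∏ i ∈ s, (1 - C (t * x i) * X)
      + C ((t - 1) * (t ^ s.card)⁻¹) *
          ∑ i ∈ s, C (∏ j ∈ s.erase i, (t * x i - x j) / (x i - x j)) *
            ∏ j ∈ s.erase i, (1 - C (t * x j) * X) := by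
  classical
  by_cases hx0 : ∀ i ∈ s, x i ≠ 0
  · exact lemA s t ht x hinj hx0
  push_neg at hx0
  obtain ⟨i0, hi0, hxi0⟩ := hx0
  have hinj' : Set.InjOn x (s.erase i0) := hinj.mono (by simp [Finset.coe_subset])
  have hx0' : ∀ j ∈ s.erase i0, x j ≠ 0 := by
    intro j hj h
    obtain ⟨hji, hjs⟩ := Finset.mem_erase.mp hj
    exact hji (hinj hjs hi0 (h.trans hxi0.symm))
  have hcard : s.card = (s.erase i0).card + 1 := by
    rw [card_erase_of_mem hi0]
    have : 1 ≤ s.card := Finset.card_pos.mpr ⟨i0, hi0⟩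
    omega
  have hA := lemA (s.erase i0) t ht x hinj' hx0'
  have hP : ∏ i ∈ s, (1 - C (x i) * X : F[X]) = ∏ i ∈ s.erase i0, (1 - C (x i) * X) := by
    rw [← Finset.mul_prod_erase s _ hi0, hxi0]
    simp
  have hQ : ∏ i ∈ s, (1 - C (t * x i) * X : F[X])
      = ∏ i ∈ s.erase i0, (1 - C (t * x i) * X) := by
    rw [← Finset.mul_prod_erase s _ hi0, hxi0]
    simp
  have hA0 : (∏ j ∈ s.erase i0, (t * x i0 - x j) / (x i0 - x j)) = 1 := by
    refine Finset.prod_eq_one fun j hj => ?_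
    rw [hxi0, mul_zero, zero_sub]
    exact div_self (neg_ne_zero.mpr (hx0' j hj))
  have hsum : ∑ i ∈ s, (C (∏ j ∈ s.erase i, (t * x i - x j) / (x i - x j)) *
        ∏ j ∈ s.erase i, (1 - C (t * x j) * X : F[X]))
      = (∏ j ∈ s.erase i0, (1 - C (t * x j) * X))
        + C t * ∑ i ∈ s.erase i0,
            C (∏ j ∈ (s.erase i0).erase i, (t * x i - x j) / (x i - x j)) *
              ∏ j ∈ (s.erase i0).erase i, (1 - C (t * x j) * X) := by
    rw [← Finset.add_sum_erase s _ hi0]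
    congr 1
    · rw [hA0, map_one, one_mul]
    · rw [Finset.mul_sum]
      refine Finset.sum_congr rfl fun i hi => ?_
      obtain ⟨hii0, his⟩ := Finset.mem_erase.mp hi
      have hi0' : i0 ∈ s.erase i := Finset.mem_erase.mpr ⟨Ne.symm hii0, hi0⟩
      have hereq : (s.erase i).erase i0 = (s.erase i0).erase i := Finset.erase_right_comm
      have hAi : ∏ j ∈ s.erase i, (t * x i - x j) / (x i - x j)
          = t * ∏ j ∈ (s.erase i0).erase i, (t * x i - x j) / (x i - x j) := by
        rw [← Finset.mul_prod_erase (s.erase i) _ hi0', hereq, hxi0, sub_zero, sub_zero,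
          mul_div_assoc, div_self (hx0' i hi), mul_one]
      have hRi : ∏ j ∈ s.erase i, (1 - C (t * x j) * X : F[X])
          = ∏ j ∈ (s.erase i0).erase i, (1 - C (t * x j) * X) := by
        rw [← Finset.mul_prod_erase (s.erase i) _ hi0', hereq, hxi0]
        simp
      rw [hAi, hRi, map_mul]
      ring
  rw [hP, hQ, hsum, hcard, hA]
  have hC1 : (C ((t ^ (s.erase i0).card)⁻¹) : F[X])
      = C ((t ^ ((s.erase i0).card + 1))⁻¹) + C ((t - 1) * (t ^ ((s.erase i0).card + 1))⁻¹) := by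
    rw [← map_add]
    congr 1
    field_simp
    ring
  have hC2 : (C ((t - 1) * (t ^ (s.erase i0).card)⁻¹) : F[X])
      = C ((t - 1) * (t ^ ((s.erase i0).card + 1))⁻¹) * C t := by
    rw [← map_mul]
    congr 1
    field_simp
    ring
  rw [hC1, hC2]
  ring

end Aux

open PowerSeries

/-- Let `F` be a field, `N` a positive integer, `t ∈ F` with `t ≠ 0`, and
`x₁, …, x_N` pairwise distinct elements of `F`.  With
`A_i = ∏_{j ≠ i} (t·x_i − x_j)/(x_i − x_j)` and
`F(z) = ∏_{i=1}^N (1 − z·x_i) · ∏_{i=1}^N (1 − t·z·x_i)⁻¹ ∈ F[[z]]`, the partial fraction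
decomposition
`F(z) = t^{−N} + (t − 1)·t^{−N} · ∑_{i=1}^N A_i · (1 − t·z·x_i)⁻¹` holds in `F[[z]]`. -/
theorem partial_fraction_decomposition {F : Type*} [Field F] {N : ℕ} (hN : 0 < N)
    (t : F) (ht : t ≠ 0) (x : Fin N → F) (hx : Function.Injective x) :
    (∏ i : Fin N, (1 - PowerSeries.C (x i) * PowerSeries.X)) *
        (∏ i : Fin N, (1 - PowerSeries.C (t * x i) * PowerSeries.X))⁻¹
      = PowerSeries.C ((t ^ N)⁻¹)
        + PowerSeries.C ((t - 1) * (t ^ N)⁻¹) *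
            ∑ i : Fin N,
              PowerSeries.C (∏ j ∈ Finset.univ.erase i, (t * x i - x j) / (x i - x j)) *
                (1 - PowerSeries.C (t * x i) * PowerSeries.X)⁻¹ := by
  classical
  have hcQi : ∀ i : Fin N,
      PowerSeries.constantCoeff (1 - PowerSeries.C (t * x i) * PowerSeries.X) = 1 := by
    intro i; simp
  have hcQ : PowerSeries.constantCoeff
      (∏ i : Fin N, (1 - PowerSeries.C (t * x i) * PowerSeries.X)) = 1 := by
    rw [map_prod]
    simp [hcQi]
  have hQ0 : (∏ i : Fin N, (1 - PowerSeries.C (t * x i) * PowerSeries.X)) ≠ 0 := by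
    intro h
    rw [h, map_zero] at hcQ
    exact zero_ne_one hcQ
  refine mul_right_cancel₀ hQ0 ?_
  rw [mul_assoc, PowerSeries.inv_mul_cancel _ (hcQ ▸ one_ne_zero), mul_one, add_mul, mul_assoc,
    Finset.sum_mul]
  have hterm : ∀ i : Fin N,
      (PowerSeries.C (∏ j ∈ Finset.univ.erase i, (t * x i - x j) / (x i - x j)) *
          (1 - PowerSeries.C (t * x i) * PowerSeries.X)⁻¹) *
        (∏ j : Fin N, (1 - PowerSeries.C (t * x j) * PowerSeries.X))
      = PowerSeries.C (∏ j ∈ Finset.univ.erase i, (t * x i - x j) / (x i - x j)) *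
          ∏ j ∈ Finset.univ.erase i, (1 - PowerSeries.C (t * x j) * PowerSeries.X) := by
    intro i
    rw [← Finset.mul_prod_erase Finset.univ _ (Finset.mem_univ i), mul_assoc, ← mul_assoc
      ((1 - PowerSeries.C (t * x i) * PowerSeries.X)⁻¹),
      PowerSeries.inv_mul_cancel _ (by rw [hcQi i]; exact one_ne_zero), one_mul]
  rw [Finset.sum_congr rfl fun i _ => hterm i]
  have hpoly := lemG (Finset.univ : Finset (Fin N)) t ht x hx.injOn
  rw [Finset.card_univ, Fintype.card_fin] at hpoly
  have hmap := congrArg (fun p : Polynomial F => (Polynomial.coeToPowerSeries.ringHom p)) hpoly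
  simp only [map_add, map_mul, map_prod, map_sum, Polynomial.coeToPowerSeries.ringHom_apply,
    Polynomial.coe_sub, Polynomial.coe_mul, Polynomial.coe_one, Polynomial.coe_C,
    Polynomial.coe_X] at hmap
  simp only [← map_prod, ← map_mul] at hmap
  exact hmap
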